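/- arXiv:2309.11583 — 3 statements merged into one kernel-verified Lean document; each statement's English description precedes it below -/
import Mathlib

section
/- (Noncommutative Yang–Mills equation ⟺ noncommutative Gauss law and Ampère equation.) Let B be a unital associative ℂ-*-algebra with four pairwise commuting ℂ-linear derivations ∂₀,…,∂₃ satisfying ∂_μ(b*) = (∂_μ b)* for all b. Let Ω := B ⊗_ℂ Λ with Λ the exterior ℂ-algebra on dx⁰,…,dx³, product (a⊗ω)(b⊗η) := ab⊗ω∧η, differential d(b⊗ω) := Σ_μ ∂_μ(b)⊗dx^μ∧ω, and let ★ be the antilinear map with ★(b⊗ω) := b*⊗★ω, where on basis forms: ★dx⁰ = dx¹∧dx²∧dx³, ★dx¹ = dx⁰∧dx²∧dx³, ★dx² = −dx⁰∧dx¹∧dx³, ★dx³ = dx⁰∧dx¹∧dx², ★(dx⁰∧dx¹) = −dx²∧dx³, ★(dx⁰∧dx²) = dx¹∧dx³, ★(dx⁰∧dx³) = −dx¹∧dx², ★(dx¹∧dx²) = dx⁰∧dx³, ★(dx¹∧dx³) = −dx⁰∧dx², ★(dx²∧dx³) = dx⁰∧dx¹, ★(dx¹∧dx²∧dx³) = dx⁰,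 ★(dx⁰∧dx²∧dx³) = dx¹, ★(dx⁰∧dx¹∧dx³) = −dx², ★(dx⁰∧dx¹∧dx²) = dx³. Given φ, A = (A₁,A₂,A₃) in B, set A♭ := φ⊗dx⁰ − Σ_k A_k⊗dx^k and F♭ := dA♭ − i·A♭·A♭. Then d(★F♭) = i(A♭·(★F♭) − (★F♭)·A♭) holds if and only if both ∇·D = i[D,A*] and ∇×H − ∂₀D = i[D,φ*] − i(H×A* + A*×H) hold, where A* := (A₁*,A₂*,A₃*) and [D,A*] := Σ_k (D_k A_k* − A_k* D_k), [D,φ*] := (D_kφ* − φ*D_k)_k. -/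
noncomputable section

namespace NC

variable {B : Type*} [Ring B] [Algebra ℂ B]

/-- A ℂ-linear derivation of the (possibly noncommutative) ℂ-algebra `B`,
given as a plain function together with its defining properties. -/
structure IsDer (δ : B → B) : Prop where
  map_add : ∀ a b : B, δ (a + b) = δ a + δ b
  map_smul : ∀ (c : ℂ) (a : B), δ (c • a) = c • δ a
  leibniz : ∀ a b : B, δ (a * b) = δ a * b + a * δ b

/-- divergence `∇·X` of a triple. -/
def divg (d1 d2 d3 : B → B) (X : B × B × B) : B := d1 X.1 + d2 X.2.1 + d3 X.2.2

/-- curl `∇×X` of a triple. -/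
def curl (d1 d2 d3 : B → B) (X : B × B × B) : B × B × B :=
  (d2 X.2.2 - d3 X.2.1, d3 X.1 - d1 X.2.2, d1 X.2.1 - d2 X.1)

/-- gradient `∇a`. -/
def grad (d1 d2 d3 : B → B) (a : B) : B × B × B := (d1 a, d2 a, d3 a)

/-- apply a derivation componentwise to a triple, e.g. `∂₀X`. -/
def dmap (d0 : B → B) (X : B × B × B) : B × B × B := (d0 X.1, d0 X.2.1, d0 X.2.2)

/-- ordered cross product `X×Y` (multiplication from top to bottom). -/
def cross (X Y : B × B × B) : B × B × B :=
  (X.2.1 * Y.2.2 - X.2.2 * Y.2.1, X.2.2 * Y.1 - X.1 * Y.2.2, X.1 * Y.2.1 - X.2.1 * Y.1)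

/-- componentwise commutator `[a,X] = (aX_k - X_k a)_k`. -/
def commS (a : B) (X : B × B × B) : B × B × B :=
  (a * X.1 - X.1 * a, a * X.2.1 - X.2.1 * a, a * X.2.2 - X.2.2 * a)

/-- componentwise commutator `[X,a] = (X_k a - a X_k)_k`. -/
def commR (X : B × B × B) (a : B) : B × B × B :=
  (X.1 * a - a * X.1, X.2.1 * a - a * X.2.1, X.2.2 * a - a * X.2.2)

/-- scalar commutator `[X,Y] = Σ_k (X_k Y_k - Y_k X_k)`. -/
def commV (X Y : B × B × B) : B :=
  (X.1 * Y.1 - Y.1 * X.1) + (X.2.1 * Y.2.1 - Y.2.1 * X.2.1) +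
    (X.2.2 * Y.2.2 - Y.2.2 * X.2.2)

/-- classical part of the electric field: `E = -∂₀A - ∇φ`. -/
def Efield (d0 d1 d2 d3 : B → B) (φ : B) (A : B × B × B) : B × B × B :=
  -dmap d0 A - grad d1 d2 d3 φ

/-- classical part of the magnetic field: `Bf = ∇×A`. -/
def Bfield (d1 d2 d3 : B → B) (A : B × B × B) : B × B × B := curl d1 d2 d3 A

/-- the noncommutative electric field `D = E + i[φ,A]`. -/
def Dfield (d0 d1 d2 d3 : B → B) (φ : B) (A : B × B × B) : B × B × B :=
  Efield d0 d1 d2 d3 φ A + Complex.I • commS φ A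

/-- the noncommutative magnetic field `H = Bf + i(A×A)`. -/
def Hfield (d1 d2 d3 : B → B) (A : B × B × B) : B × B × B :=
  Bfield d1 d2 d3 A + Complex.I • cross A A

end NC


namespace NC

/-- componentwise star of a triple. -/
def starV {B : Type*} [Ring B] [StarRing B] (X : B × B × B) : B × B × B :=
  (star X.1, star X.2.1, star X.2.2)

open scoped TensorProduct

/-- the exterior ℂ-algebra on four generators `dx⁰,…,dx³`. -/
abbrev Lam4 : Type := ExteriorAlgebra ℂ (Fin 4 → ℂ)

/-- the generator `dx^μ` of the exterior algebra. -/
noncomputable def dx (μ : Fin 4) : Lam4 := ExteriorAlgebra.ι ℂ (Pi.single μ 1)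

/-- `Ω := B ⊗_ℂ Λ`, the quantum differential forms, with multiplication
`(a⊗ω)(b⊗η) = ab ⊗ ω∧η`. -/
abbrev OmegaB (B : Type*) [Ring B] [Algebra ℂ B] : Type _ := B ⊗[ℂ] Lam4

/-- the differential `d(b⊗ω) = Σ_μ ∂_μ(b) ⊗ dx^μ∧ω`. -/
noncomputable def dOp {B : Type*} [Ring B] [Algebra ℂ B]
    (der : Fin 4 → (B →ₗ[ℂ] B)) : OmegaB B →ₗ[ℂ] OmegaB B :=
  ∑ μ : Fin 4, TensorProduct.map (der μ) (LinearMap.mulLeft ℂ (dx μ))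

/-- the potential 1-form `A♭ = φ⊗dx⁰ - A₁⊗dx¹ - A₂⊗dx² - A₃⊗dx³`. -/
noncomputable def Aflat {B : Type*} [Ring B] [Algebra ℂ B]
    (φ : B) (A : B × B × B) : OmegaB B :=
  φ ⊗ₜ[ℂ] dx 0 - A.1 ⊗ₜ[ℂ] dx 1 - A.2.1 ⊗ₜ[ℂ] dx 2 - A.2.2 ⊗ₜ[ℂ] dx 3

/-- the field strength `F♭ = dA♭ - i·A♭·A♭`. -/
noncomputable def Fflat {B : Type*} [Ring B] [Algebra ℂ B]
    (der : Fin 4 → (B →ₗ[ℂ] B)) (φ : B) (A : B × B × B) : OmegaB B :=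
  dOp der (Aflat φ A) - Complex.I • (Aflat φ A * Aflat φ A)



section Aux

lemma dx_sq (μ : Fin 4) : dx μ * dx μ = 0 := ExteriorAlgebra.ι_sq_zero _
lemma dx_swap (μ ν : Fin 4) : dx μ * dx ν = -(dx ν * dx μ) :=
  eq_neg_of_add_eq_zero_left (ExteriorAlgebra.ι_add_mul_swap _ _)
lemma dx_swap' (μ ν : Fin 4) (X : Lam4) : dx μ * (dx ν * X) = -(dx ν * (dx μ * X)) := by
  rw [← mul_assoc, dx_swap, neg_mul, mul_assoc]
lemma dx_sq' (μ : Fin 4) (X : Lam4) : dx μ * (dx μ * X) = 0 := by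
  rw [← mul_assoc, dx_sq, zero_mul]

lemma sw10 : dx 1 * dx 0 = -(dx 0 * dx 1) := dx_swap 1 0
lemma sw20 : dx 2 * dx 0 = -(dx 0 * dx 2) := dx_swap 2 0
lemma sw21 : dx 2 * dx 1 = -(dx 1 * dx 2) := dx_swap 2 1
lemma sw30 : dx 3 * dx 0 = -(dx 0 * dx 3) := dx_swap 3 0
lemma sw31 : dx 3 * dx 1 = -(dx 1 * dx 3) := dx_swap 3 1
lemma sw32 : dx 3 * dx 2 = -(dx 2 * dx 3) := dx_swap 3 2
lemma csw10 (X : Lam4) : dx 1 * (dx 0 * X) = -(dx 0 * (dx 1 * X)) := dx_swap' 1 0 X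
lemma csw20 (X : Lam4) : dx 2 * (dx 0 * X) = -(dx 0 * (dx 2 * X)) := dx_swap' 2 0 X
lemma csw21 (X : Lam4) : dx 2 * (dx 1 * X) = -(dx 1 * (dx 2 * X)) := dx_swap' 2 1 X
lemma csw30 (X : Lam4) : dx 3 * (dx 0 * X) = -(dx 0 * (dx 3 * X)) := dx_swap' 3 0 X
lemma csw31 (X : Lam4) : dx 3 * (dx 1 * X) = -(dx 1 * (dx 3 * X)) := dx_swap' 3 1 X
lemma csw32 (X : Lam4) : dx 3 * (dx 2 * X) = -(dx 2 * (dx 3 * X)) := dx_swap' 3 2 X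
lemma sq0 : dx 0 * dx 0 = 0 := dx_sq 0
lemma sq1 : dx 1 * dx 1 = 0 := dx_sq 1
lemma sq2 : dx 2 * dx 2 = 0 := dx_sq 2
lemma sq3 : dx 3 * dx 3 = 0 := dx_sq 3
lemma csq0 (X : Lam4) : dx 0 * (dx 0 * X) = 0 := dx_sq' 0 X
lemma csq1 (X : Lam4) : dx 1 * (dx 1 * X) = 0 := dx_sq' 1 X
lemma csq2 (X : Lam4) : dx 2 * (dx 2 * X) = 0 := dx_sq' 2 X
lemma csq3 (X : Lam4) : dx 3 * (dx 3 * X) = 0 := dx_sq' 3 X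

/-- auxiliary: degree-3 alternating "coefficient" functionals. -/
def pick3 (t : Fin 3 → Fin 4) : ∀ i : ℕ, ((Fin 4 → ℂ) [⋀^Fin i]→ₗ[ℂ] ℂ)
  | 3 => Matrix.detRowAlternating.compLinearMap (LinearMap.funLeft ℂ ℂ t)
  | _ => 0

noncomputable def fT (t : Fin 3 → Fin 4) : Lam4 →ₗ[ℂ] ℂ :=
  ExteriorAlgebra.liftAlternating (pick3 t)

lemma dx_triple (a b c : Fin 4) :
    dx a * dx b * dx c =
      ExteriorAlgebra.ιMulti ℂ 3 ![Pi.single a 1, Pi.single b 1, Pi.single c 1] := by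
  rw [ExteriorAlgebra.ιMulti_apply]
  simp [dx, List.ofFn_succ, mul_assoc]

lemma fT_dx (t : Fin 3 → Fin 4) (a b c : Fin 4) :
    fT t (dx a * dx b * dx c) =
      Matrix.det (Matrix.of fun i j =>
        Pi.single (M := fun _ : Fin 4 => ℂ) (![a,b,c] i) 1 (t j)) := by
  rw [dx_triple, fT, ExteriorAlgebra.liftAlternating_apply_ιMulti]
  rfl

noncomputable def piT {B : Type*} [Ring B] [Algebra ℂ B] (f : Lam4 →ₗ[ℂ] ℂ) :
    OmegaB B →ₗ[ℂ] B :=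
  (TensorProduct.rid ℂ B).toLinearMap ∘ₗ TensorProduct.map LinearMap.id f

lemma piT_tmul {B : Type*} [Ring B] [Algebra ℂ B] (f : Lam4 →ₗ[ℂ] ℂ) (b : B) (w : Lam4) :
    piT f (b ⊗ₜ[ℂ] w) = f w • b := by
  simp [piT]

lemma sep {B : Type*} [Ring B] [Algebra ℂ B] (g c1 c2 c3 g' c1' c2' c3' : B) :
    (g ⊗ₜ[ℂ] (dx 1 * dx 2 * dx 3) + c1 ⊗ₜ[ℂ] (dx 0 * dx 2 * dx 3) +
        c2 ⊗ₜ[ℂ] (dx 0 * dx 1 * dx 3) + c3 ⊗ₜ[ℂ] (dx 0 * dx 1 * dx 2) =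
      g' ⊗ₜ[ℂ] (dx 1 * dx 2 * dx 3) + c1' ⊗ₜ[ℂ] (dx 0 * dx 2 * dx 3) +
        c2' ⊗ₜ[ℂ] (dx 0 * dx 1 * dx 3) + c3' ⊗ₜ[ℂ] (dx 0 * dx 1 * dx 2)) ↔
    (g = g' ∧ c1 = c1' ∧ c2 = c2' ∧ c3 = c3') := by
  constructor
  · intro h
    refine ⟨?_, ?_, ?_, ?_⟩
    · have := congrArg (piT (fT ![1,2,3])) h
      simpa [piT_tmul, fT_dx, Matrix.det_fin_three, Pi.single_apply] using this
    · have := congrArg (piT (fT ![0,2,3])) h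
      simpa [piT_tmul, fT_dx, Matrix.det_fin_three, Pi.single_apply] using this
    · have := congrArg (piT (fT ![0,1,3])) h
      simpa [piT_tmul, fT_dx, Matrix.det_fin_three, Pi.single_apply] using this
    · have := congrArg (piT (fT ![0,1,2])) h
      simpa [piT_tmul, fT_dx, Matrix.det_fin_three, Pi.single_apply] using this
  · rintro ⟨h1, h2, h3, h4⟩
    rw [h1, h2, h3, h4]

end Aux

set_option maxHeartbeats 2000000

/-- **Noncommutative Yang–Mills equation ⟺ noncommutative Gauss law and Ampère
equation**: with `★` the antilinear Hodge operator (`★(b⊗ω) = b*⊗★ω` on the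
listed basis forms), the equation `d(★F♭) = i(A♭·(★F♭) - (★F♭)·A♭)` holds if
and only if `∇·D = i[D,A*]` and `∇×H - ∂₀D = i[D,φ*] - i(H×A* + A*×H)`. -/
theorem nc_yang_mills_iff_gauss_ampere {B : Type*} [Ring B] [Algebra ℂ B]
    [StarRing B] [StarModule ℂ B]
    (der : Fin 4 → (B →ₗ[ℂ] B))
    (hleib : ∀ μ : Fin 4, ∀ a b : B, der μ (a * b) = der μ a * b + a * der μ b)
    (hcomm : ∀ μ ν : Fin 4, ∀ x : B, der μ (der ν x) = der ν (der μ x))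
    (hder_star : ∀ μ : Fin 4, ∀ b : B, der μ (star b) = star (der μ b))
    (hodge : OmegaB B → OmegaB B)
    (hodge_add : ∀ x y : OmegaB B, hodge (x + y) = hodge x + hodge y)
    (hodge_conj : ∀ (c : ℂ) (x : OmegaB B),
      hodge (c • x) = (starRingEnd ℂ c) • hodge x)
    (h1_0 : ∀ b : B, hodge (b ⊗ₜ[ℂ] dx 0) = star b ⊗ₜ[ℂ] (dx 1 * dx 2 * dx 3))
    (h1_1 : ∀ b : B, hodge (b ⊗ₜ[ℂ] dx 1) = star b ⊗ₜ[ℂ] (dx 0 * dx 2 * dx 3))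
    (h1_2 : ∀ b : B, hodge (b ⊗ₜ[ℂ] dx 2) = star b ⊗ₜ[ℂ] (-(dx 0 * dx 1 * dx 3)))
    (h1_3 : ∀ b : B, hodge (b ⊗ₜ[ℂ] dx 3) = star b ⊗ₜ[ℂ] (dx 0 * dx 1 * dx 2))
    (h2_01 : ∀ b : B, hodge (b ⊗ₜ[ℂ] (dx 0 * dx 1)) = star b ⊗ₜ[ℂ] (-(dx 2 * dx 3)))
    (h2_02 : ∀ b : B, hodge (b ⊗ₜ[ℂ] (dx 0 * dx 2)) = star b ⊗ₜ[ℂ] (dx 1 * dx 3))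
    (h2_03 : ∀ b : B, hodge (b ⊗ₜ[ℂ] (dx 0 * dx 3)) = star b ⊗ₜ[ℂ] (-(dx 1 * dx 2)))
    (h2_12 : ∀ b : B, hodge (b ⊗ₜ[ℂ] (dx 1 * dx 2)) = star b ⊗ₜ[ℂ] (dx 0 * dx 3))
    (h2_13 : ∀ b : B, hodge (b ⊗ₜ[ℂ] (dx 1 * dx 3)) = star b ⊗ₜ[ℂ] (-(dx 0 * dx 2)))
    (h2_23 : ∀ b : B, hodge (b ⊗ₜ[ℂ] (dx 2 * dx 3)) = star b ⊗ₜ[ℂ] (dx 0 * dx 1))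
    (h3_123 : ∀ b : B, hodge (b ⊗ₜ[ℂ] (dx 1 * dx 2 * dx 3)) = star b ⊗ₜ[ℂ] dx 0)
    (h3_023 : ∀ b : B, hodge (b ⊗ₜ[ℂ] (dx 0 * dx 2 * dx 3)) = star b ⊗ₜ[ℂ] dx 1)
    (h3_013 : ∀ b : B, hodge (b ⊗ₜ[ℂ] (dx 0 * dx 1 * dx 3)) = star b ⊗ₜ[ℂ] (-dx 2))
    (h3_012 : ∀ b : B, hodge (b ⊗ₜ[ℂ] (dx 0 * dx 1 * dx 2)) = star b ⊗ₜ[ℂ] dx 3)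
    (φ : B) (A : B × B × B) :
    (dOp der (hodge (Fflat der φ A)) =
        Complex.I • (Aflat φ A * hodge (Fflat der φ A) -
          hodge (Fflat der φ A) * Aflat φ A)) ↔
    (divg ⇑(der 1) ⇑(der 2) ⇑(der 3)
        (Dfield ⇑(der 0) ⇑(der 1) ⇑(der 2) ⇑(der 3) φ A) =
      Complex.I • commV (Dfield ⇑(der 0) ⇑(der 1) ⇑(der 2) ⇑(der 3) φ A) (starV A) ∧
    curl ⇑(der 1) ⇑(der 2) ⇑(der 3) (Hfield ⇑(der 1) ⇑(der 2) ⇑(der 3) A) -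
        dmap ⇑(der 0) (Dfield ⇑(der 0) ⇑(der 1) ⇑(der 2) ⇑(der 3) φ A) =
      Complex.I • commR (Dfield ⇑(der 0) ⇑(der 1) ⇑(der 2) ⇑(der 3) φ A) (star φ) -
        Complex.I • (cross (Hfield ⇑(der 1) ⇑(der 2) ⇑(der 3) A) (starV A) +
          cross (starV A) (Hfield ⇑(der 1) ⇑(der 2) ⇑(der 3) A))) := by
  obtain ⟨A1, A2, A3⟩ := A
  set Dt := Dfield ⇑(der 0) ⇑(der 1) ⇑(der 2) ⇑(der 3) φ (A1, A2, A3) with hDt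
  set Ht := Hfield ⇑(der 1) ⇑(der 2) ⇑(der 3) (A1, A2, A3) with hHt
  have hF : Fflat der φ (A1, A2, A3) =
      Dt.1 ⊗ₜ[ℂ] (dx 0 * dx 1) + Dt.2.1 ⊗ₜ[ℂ] (dx 0 * dx 2) + Dt.2.2 ⊗ₜ[ℂ] (dx 0 * dx 3) +
        (-Ht.2.2) ⊗ₜ[ℂ] (dx 1 * dx 2) + Ht.2.1 ⊗ₜ[ℂ] (dx 1 * dx 3) +
        (-Ht.1) ⊗ₜ[ℂ] (dx 2 * dx 3) := by
    rw [hDt, hHt]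
    simp only [Fflat, Aflat, dOp, Dfield, Hfield, Efield, Bfield, dmap, grad, curl, commS, cross,
      LinearMap.sum_apply, LinearMap.add_apply, Fin.sum_univ_four, map_sub, map_add, map_neg, map_smul,
      mul_sub, sub_mul,
      TensorProduct.map_tmul, LinearMap.mulLeft_apply, LinearMap.id_coe, id_eq,
      Prod.fst_add, Prod.snd_add, Prod.fst_sub, Prod.snd_sub, Prod.fst_neg, Prod.snd_neg,
      Prod.smul_fst, Prod.smul_snd, Prod.mk_add_mk, Prod.neg_mk, Prod.mk_sub_mk, Prod.smul_mk,
      smul_sub, smul_add, smul_neg,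
      sw10, sw20, sw21, sw30, sw31, sw32, sq0, sq1, sq2, sq3,
      Algebra.TensorProduct.tmul_mul_tmul,
      mul_neg, neg_neg, mul_zero, zero_mul,
      TensorProduct.tmul_neg, TensorProduct.neg_tmul, TensorProduct.add_tmul,
      TensorProduct.sub_tmul, TensorProduct.tmul_zero, TensorProduct.zero_tmul,
      ← TensorProduct.smul_tmul']
    module
  have hS : hodge (Fflat der φ (A1, A2, A3)) =
      (-(star Ht.1)) ⊗ₜ[ℂ] (dx 0 * dx 1) + (-(star Ht.2.1)) ⊗ₜ[ℂ] (dx 0 * dx 2) +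
        (-(star Ht.2.2)) ⊗ₜ[ℂ] (dx 0 * dx 3) + (-(star Dt.2.2)) ⊗ₜ[ℂ] (dx 1 * dx 2) +
        (star Dt.2.1) ⊗ₜ[ℂ] (dx 1 * dx 3) + (-(star Dt.1)) ⊗ₜ[ℂ] (dx 2 * dx 3) := by
    rw [hF, hodge_add, hodge_add, hodge_add, hodge_add, hodge_add,
      h2_01, h2_02, h2_03, h2_12, h2_13, h2_23]
    simp only [star_neg, TensorProduct.tmul_neg, TensorProduct.neg_tmul, neg_neg]
    module
  have hL : dOp der (hodge (Fflat der φ (A1, A2, A3))) =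
      (star (-(divg ⇑(der 1) ⇑(der 2) ⇑(der 3) Dt))) ⊗ₜ[ℂ] (dx 1 * dx 2 * dx 3) +
        (star ((curl ⇑(der 1) ⇑(der 2) ⇑(der 3) Ht - dmap ⇑(der 0) Dt).1)) ⊗ₜ[ℂ]
          (dx 0 * dx 2 * dx 3) +
        (star (-((curl ⇑(der 1) ⇑(der 2) ⇑(der 3) Ht - dmap ⇑(der 0) Dt).2.1))) ⊗ₜ[ℂ]
          (dx 0 * dx 1 * dx 3) +
        (star ((curl ⇑(der 1) ⇑(der 2) ⇑(der 3) Ht - dmap ⇑(der 0) Dt).2.2)) ⊗ₜ[ℂ]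
          (dx 0 * dx 1 * dx 2) := by
    rw [hS]
    simp only [dOp, divg, curl, dmap, LinearMap.sum_apply, LinearMap.add_apply, Fin.sum_univ_four,
      map_add, map_sub, map_neg, TensorProduct.map_tmul, LinearMap.mulLeft_apply,
      LinearMap.id_coe, id_eq, hder_star, star_add, star_sub, star_neg,
      Prod.fst_sub, Prod.snd_sub, Prod.mk_sub_mk,
      mul_assoc, csw10, csw20, csw21, csw30, csw31, csw32, csq0, csq1, csq2, csq3,
      sw10, sw20, sw21, sw30, sw31, sw32, sq0, sq1, sq2, sq3,
      mul_neg, neg_neg, mul_zero, zero_mul,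
      TensorProduct.tmul_neg, TensorProduct.neg_tmul, TensorProduct.add_tmul,
      TensorProduct.sub_tmul, TensorProduct.tmul_zero, TensorProduct.zero_tmul]
    module
  have hR : Complex.I • (Aflat φ (A1, A2, A3) * hodge (Fflat der φ (A1, A2, A3)) -
        hodge (Fflat der φ (A1, A2, A3)) * Aflat φ (A1, A2, A3)) =
      (star (-(Complex.I • commV Dt (starV (A1, A2, A3))))) ⊗ₜ[ℂ] (dx 1 * dx 2 * dx 3) +
        (star ((Complex.I • commR Dt (star φ) -
          Complex.I • (cross Ht (starV (A1, A2, A3)) +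
            cross (starV (A1, A2, A3)) Ht)).1)) ⊗ₜ[ℂ] (dx 0 * dx 2 * dx 3) +
        (star (-((Complex.I • commR Dt (star φ) -
          Complex.I • (cross Ht (starV (A1, A2, A3)) +
            cross (starV (A1, A2, A3)) Ht)).2.1))) ⊗ₜ[ℂ] (dx 0 * dx 1 * dx 3) +
        (star ((Complex.I • commR Dt (star φ) -
          Complex.I • (cross Ht (starV (A1, A2, A3)) +
            cross (starV (A1, A2, A3)) Ht)).2.2)) ⊗ₜ[ℂ] (dx 0 * dx 1 * dx 2) := by
    rw [hS]
    simp only [Aflat, commV, commR, cross, starV, star_add, star_sub, star_neg, star_mul,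
      star_smul, star_star, Complex.star_def, Complex.conj_I, neg_smul, smul_sub, smul_add,
      smul_neg, sub_mul, mul_sub, add_mul, mul_add, neg_mul, mul_neg,
      Prod.fst_add, Prod.snd_add, Prod.fst_sub, Prod.snd_sub, Prod.smul_fst, Prod.smul_snd,
      Prod.mk_add_mk, Prod.mk_sub_mk, Prod.smul_mk,
      Algebra.TensorProduct.tmul_mul_tmul,
      mul_assoc, csw10, csw20, csw21, csw30, csw31, csw32, csq0, csq1, csq2, csq3,
      sw10, sw20, sw21, sw30, sw31, sw32, sq0, sq1, sq2, sq3,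
      neg_neg, mul_zero, zero_mul,
      TensorProduct.tmul_neg, TensorProduct.neg_tmul, TensorProduct.add_tmul,
      TensorProduct.sub_tmul, TensorProduct.tmul_zero, TensorProduct.zero_tmul,
      ← TensorProduct.smul_tmul']
    module
  rw [hL, hR, sep]
  constructor
  · rintro ⟨h1, h2, h3, h4⟩
    exact ⟨neg_inj.mp (star_injective h1),
      Prod.ext (star_injective h2)
        (Prod.ext (neg_inj.mp (star_injective h3)) (star_injective h4))⟩
  · rintro ⟨h1, h2⟩
    exact ⟨congrArg star (congrArg Neg.neg h1),
      congrArg star (congrArg Prod.fst h2),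
      congrArg star (congrArg Neg.neg (congrArg (fun p => p.2.1) h2)),
      congrArg star (congrArg (fun p => p.2.2) h2)⟩

end NC
end
end

section
/- (Explicit solution with magnetic charge.) Let θ ∈ ℝ, and let B be a unital associative ℂ-algebra containing elements x¹, x², x³ with x¹x² = x²x¹, x¹x³ = x³x¹ and x²x³ − x³x² = iθ·1, equipped with four pairwise commuting ℂ-linear derivations ∂₀,…,∂₃ such that ∂_μ(x^ν) = δ_{μν}·1 for μ,ν ∈ {1,2,3} and ∂₀(x^ν) = 0 for ν ∈ {1,2,3}. Take the gauge potential φ := 0, A := (0, −x³, −x¹x²). Then the corresponding noncommutative fields are D = (0,0,0) and H = (1 − (1−θ)x¹, x², 0), and the noncommutative Maxwell equations are satisfied with constant magnetic charge density and all other sources zero: ∇·H = θ·1 = i[Bf,A], ∇×D + ∂₀H = (0,0,0), ∇·D = 0, and ∇×H − ∂₀D = (0,0,0). -/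
noncomputable section

namespace NC

lemma IsDer.zero' {B : Type*} [Ring B] [Algebra ℂ B] {δ : B → B} (h : IsDer δ) :
    δ 0 = 0 := by
  have := h.map_add 0 0
  simpa using this.symm

lemma IsDer.one' {B : Type*} [Ring B] [Algebra ℂ B] {δ : B → B} (h : IsDer δ) :
    δ 1 = 0 := by
  have := h.leibniz 1 1
  simp only [one_mul, mul_one] at this
  have h2 : δ 1 + δ 1 = δ 1 + 0 := by rw [add_zero, ← this]
  exact (add_left_cancel h2)

lemma IsDer.neg' {B : Type*} [Ring B] [Algebra ℂ B] {δ : B → B} (h : IsDer δ)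
    (a : B) : δ (-a) = -δ a := by
  have := h.map_smul (-1 : ℂ) a
  simpa using this

/-- **Explicit solution with magnetic charge** on the Moyal–Weyl-type algebra with
`x²x³ - x³x² = iθ·1`: for the gauge potential `φ = 0`, `A = (0, -x³, -x¹x²)`
(i.e. `A^ω(ϑ) = x³dx² + x¹x²dx³`), the noncommutative fields are `D = 0` and
`H = (1 - (1-θ)x¹, x², 0)`, and the noncommutative Maxwell equations hold with
constant magnetic charge density `θ·1` and all other sources zero. -/
theorem nc_magnetic_charge_solution {B : Type*} [Ring B] [Algebra ℂ B]
    (θ : ℝ) (x1 x2 x3 : B)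
    (h12 : x1 * x2 = x2 * x1) (h13 : x1 * x3 = x3 * x1)
    (h23 : x2 * x3 - x3 * x2 = (θ : ℂ) • (Complex.I • (1 : B)))
    (d0 d1 d2 d3 : B → B)
    (hd0 : IsDer d0) (hd1 : IsDer d1) (hd2 : IsDer d2) (hd3 : IsDer d3)
    (hcomm : ∀ δ ∈ [d0, d1, d2, d3], ∀ δ' ∈ [d0, d1, d2, d3], ∀ x : B,
      δ (δ' x) = δ' (δ x))
    (h01 : d0 x1 = 0) (h02 : d0 x2 = 0) (h03 : d0 x3 = 0)
    (h11 : d1 x1 = 1) (h12' : d1 x2 = 0) (h13' : d1 x3 = 0)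
    (h21 : d2 x1 = 0) (h22 : d2 x2 = 1) (h23' : d2 x3 = 0)
    (h31 : d3 x1 = 0) (h32 : d3 x2 = 0) (h33 : d3 x3 = 1) :
    Dfield d0 d1 d2 d3 (0 : B) (0, -x3, -(x1 * x2)) = 0 ∧
    Hfield d1 d2 d3 ((0 : B), -x3, -(x1 * x2)) =
      (1 - ((1 : ℂ) - (θ : ℂ)) • x1, x2, 0) ∧
    divg d1 d2 d3 (Hfield d1 d2 d3 ((0 : B), -x3, -(x1 * x2))) = (θ : ℂ) • (1 : B) ∧
    divg d1 d2 d3 (Hfield d1 d2 d3 ((0 : B), -x3, -(x1 * x2))) =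
      Complex.I • commV (Bfield d1 d2 d3 ((0 : B), -x3, -(x1 * x2)))
        ((0 : B), -x3, -(x1 * x2)) ∧
    curl d1 d2 d3 (Dfield d0 d1 d2 d3 (0 : B) (0, -x3, -(x1 * x2))) +
      dmap d0 (Hfield d1 d2 d3 ((0 : B), -x3, -(x1 * x2))) = 0 ∧
    divg d1 d2 d3 (Dfield d0 d1 d2 d3 (0 : B) (0, -x3, -(x1 * x2))) = 0 ∧
    curl d1 d2 d3 (Hfield d1 d2 d3 ((0 : B), -x3, -(x1 * x2))) -
      dmap d0 (Dfield d0 d1 d2 d3 (0 : B) (0, -x3, -(x1 * x2))) = 0 := by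

  -- derivative values on products
  have e1 : d1 (x1 * x2) = x2 := by rw [hd1.leibniz, h11, h12']; simp
  have e2 : d2 (x1 * x2) = x1 := by rw [hd2.leibniz, h21, h22]; simp
  have e3 : d3 (x1 * x2) = 0 := by rw [hd3.leibniz, h31, h32]; simp
  have e0 : d0 (x1 * x2) = 0 := by rw [hd0.leibniz, h01, h02]; simp
  -- key commutator computation
  have hIc : Complex.I * ((θ : ℂ) * Complex.I) = -(θ : ℂ) := by
    rw [show Complex.I * ((θ : ℂ) * Complex.I)
        = (θ : ℂ) * (Complex.I * Complex.I) by ring, Complex.I_mul_I]; ring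
  have hI1 : ∀ y : B, Complex.I • ((θ : ℂ) • Complex.I • y) = -((θ : ℂ) • y) := by
    intro y
    rw [smul_smul, smul_smul, mul_assoc, hIc, neg_smul]
  have hx : x1 * (x2 * x3) - x1 * (x3 * x2) = (θ : ℂ) • (Complex.I • x1) := by
    rw [← mul_sub, h23, mul_smul_comm, mul_smul_comm, mul_one]
  have key : x3 * (x1 * x2) - x1 * x2 * x3 = -((θ : ℂ) • (Complex.I • x1)) := by
    rw [← hx, ← mul_assoc, ← h13]
    noncomm_ring
  have hIt : Complex.I • (x3 * (x1 * x2) - x1 * x2 * x3) = (θ : ℂ) • x1 := by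
    rw [key, smul_neg, hI1, neg_neg]
  -- derivative of the first H-component
  have dH1 : ∀ δ : B → B, IsDer δ →
      δ (1 - ((1 : ℂ) - (θ : ℂ)) • x1) = -(((1 : ℂ) - (θ : ℂ)) • δ x1) := by
    intro δ h
    rw [sub_eq_add_neg, h.map_add, h.one', zero_add, ← neg_smul, h.map_smul, neg_smul]
  -- D = 0
  have hD : Dfield d0 d1 d2 d3 (0 : B) (0, -x3, -(x1 * x2)) = 0 := by
    simp [Dfield, Efield, commS, dmap, grad, Prod.ext_iff, hd0.zero', hd1.zero',
      hd2.zero', hd3.zero', hd0.neg', h01, h02, h03, e0]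
  -- H computation
  have hH : Hfield d1 d2 d3 ((0 : B), -x3, -(x1 * x2)) =
      (1 - ((1 : ℂ) - (θ : ℂ)) • x1, x2, 0) := by
    simp only [Hfield, Bfield, curl, cross, Prod.ext_iff, Prod.fst_add, Prod.snd_add,
      Prod.smul_fst, Prod.smul_snd, hd1.neg', hd2.neg', hd3.neg', e1, e2, e3,
      h13', h23', h33, hd1.zero', hd2.zero', hd3.zero']
    refine ⟨?_, ?_, ?_⟩
    · rw [show -x3 * -(x1 * x2) - -(x1 * x2) * -x3 = x3 * (x1 * x2) - x1 * x2 * x3 by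
        noncomm_ring, hIt]
      module
    · simp
    · simp
  have hdH : divg d1 d2 d3 (Hfield d1 d2 d3 ((0 : B), -x3, -(x1 * x2)))
      = (θ : ℂ) • (1 : B) := by
    rw [hH]
    simp only [divg, dH1 d1 hd1, h11, h22, hd3.zero']
    module
  refine ⟨hD, hH, hdH, ?_, ?_, ?_, ?_⟩
  · -- magnetic charge = i [Bf, A]
    rw [hdH]
    simp only [Bfield, curl, commV, hd1.neg', hd2.neg', hd3.neg', e1, e2, e3,
      h13', h23', h33, hd1.zero', hd2.zero', hd3.zero']
    rw [show (-x1 - -1) * 0 - 0 * (-x1 - -1) + ((0 - -x2) * -x3 - -x3 * (0 - -x2)) +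
        ((-0 - 0) * -(x1 * x2) - -(x1 * x2) * (-0 - 0))
        = -(x2 * x3 - x3 * x2) by noncomm_ring, h23, smul_neg, hI1, neg_neg]
  · rw [hD, hH]
    simp only [curl, dmap, dH1 d0 hd0]
    simp [hd0.zero', hd1.zero', hd2.zero', hd3.zero', h01, h02, Prod.ext_iff]
  · rw [hD]
    simp [divg, hd1.zero', hd2.zero', hd3.zero']
  · rw [hD, hH]
    simp only [curl, dmap, dH1 d3 hd3, dH1 d2 hd2]
    simp [hd0.zero', hd1.zero', hd2.zero', h31, h21, h12', h32, Prod.ext_iff]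

end NC
end
end

section
/- (Two-field noncommutative Faraday/Ampère-type identities from the Bianchi identity.) Let B be a unital associative ℂ-algebra with four pairwise commuting ℂ-linear derivations ∂₀,…,∂₃, and let (φ^e, A^e) and (φ^m, A^m) be arbitrary pairs of a scalar and a triple of elements of B. With the fields defined below, ∇×D^e + ∂₀H^e = −j and ∇×H^m + ∂₀D^m = −j, where −j := i[φ^m,B^e] + i[φ^e,E^m] − i(E^e×A^m + A^m×E^e + B^m×A^e + A^e×B^m), with [a,X] := (aX_k − X_ka)_k componentwise. In particular both equations hold for every pair of gauge potentials. -/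
noncomputable section

namespace NC

variable {B : Type*} [Ring B] [Algebra ℂ B]

lemma IsDer.map_zero' {δ : B → B} (h : IsDer δ) : δ 0 = 0 := by
  have := h.map_smul 0 0; simpa using this

lemma IsDer.map_neg' {δ : B → B} (h : IsDer δ) (a : B) : δ (-a) = -δ a := by
  have := h.map_smul (-1 : ℂ) a; simpa using this

lemma IsDer.map_sub' {δ : B → B} (h : IsDer δ) (a b : B) : δ (a - b) = δ a - δ b := by
  rw [sub_eq_add_neg, h.map_add, h.map_neg', sub_eq_add_neg]

end NC

namespace NC

namespace TwoPhoton

variable {B : Type*} [Ring B] [Algebra ℂ B]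

/-- `K := [φ^m,A^e] + [φ^e,A^m]` (componentwise commutators). -/
def Kv (φe φm : B) (Ae Am : B × B × B) : B × B × B := commS φm Ae + commS φe Am

/-- `C := A^e×A^m + A^m×A^e`. -/
def Cv (Ae Am : B × B × B) : B × B × B := cross Ae Am + cross Am Ae

/-- `E^e := -∂₀A^e - ∇φ^e`. -/
def Ee (d0 d1 d2 d3 : B → B) (φe : B) (Ae : B × B × B) : B × B × B :=
  -dmap d0 Ae - grad d1 d2 d3 φe

/-- `B^e := ∇×A^e`. -/
def Be (d1 d2 d3 : B → B) (Ae : B × B × B) : B × B × B := curl d1 d2 d3 Ae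

/-- `B^m := -∂₀A^m - ∇φ^m`. -/
def Bm (d0 d1 d2 d3 : B → B) (φm : B) (Am : B × B × B) : B × B × B :=
  -dmap d0 Am - grad d1 d2 d3 φm

/-- `E^m := ∇×A^m`. -/
def Em (d1 d2 d3 : B → B) (Am : B × B × B) : B × B × B := curl d1 d2 d3 Am

/-- `D^e := E^e + iK`. -/
def De (d0 d1 d2 d3 : B → B) (φe : B) (Ae : B × B × B) (φm : B) (Am : B × B × B) :
    B × B × B :=
  Ee d0 d1 d2 d3 φe Ae + Complex.I • Kv φe φm Ae Am

/-- `H^e := B^e + iC`. -/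
def He (d1 d2 d3 : B → B) (Ae Am : B × B × B) : B × B × B :=
  Be d1 d2 d3 Ae + Complex.I • Cv Ae Am

/-- `H^m := B^m + iK`. -/
def Hm (d0 d1 d2 d3 : B → B) (φe : B) (Ae : B × B × B) (φm : B) (Am : B × B × B) :
    B × B × B :=
  Bm d0 d1 d2 d3 φm Am + Complex.I • Kv φe φm Ae Am

/-- `D^m := E^m + iC`. -/
def Dm (d1 d2 d3 : B → B) (Ae Am : B × B × B) : B × B × B :=
  Em d1 d2 d3 Am + Complex.I • Cv Ae Am

end TwoPhoton


namespace TwoPhoton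

set_option maxHeartbeats 1600000 in
/-- **Two-field noncommutative Faraday/Ampère-type identities** from the Bianchi
identity of the two-photon model: for every pair of gauge potentials,
`∇×D^e + ∂₀H^e = -j` and `∇×H^m + ∂₀D^m = -j`, where
`-j := i[φ^m,B^e] + i[φ^e,E^m] - i(E^e×A^m + A^m×E^e + B^m×A^e + A^e×B^m)`. -/
theorem nc_two_field_faraday_ampere {B : Type*} [Ring B] [Algebra ℂ B]
    (d0 d1 d2 d3 : B → B)
    (h0 : IsDer d0) (h1 : IsDer d1) (h2 : IsDer d2) (h3 : IsDer d3)
    (hcomm : ∀ δ ∈ [d0, d1, d2, d3], ∀ δ' ∈ [d0, d1, d2, d3], ∀ x : B,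
      δ (δ' x) = δ' (δ x))
    (φe φm : B) (Ae Am : B × B × B) :
    curl d1 d2 d3 (De d0 d1 d2 d3 φe Ae φm Am) +
        dmap d0 (He d1 d2 d3 Ae Am) =
      Complex.I • commS φm (Be d1 d2 d3 Ae) +
        Complex.I • commS φe (Em d1 d2 d3 Am) -
        Complex.I • (cross (Ee d0 d1 d2 d3 φe Ae) Am +
          cross Am (Ee d0 d1 d2 d3 φe Ae) +
          cross (Bm d0 d1 d2 d3 φm Am) Ae +
          cross Ae (Bm d0 d1 d2 d3 φm Am)) ∧
    curl d1 d2 d3 (Hm d0 d1 d2 d3 φe Ae φm Am) +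
        dmap d0 (Dm d1 d2 d3 Ae Am) =
      Complex.I • commS φm (Be d1 d2 d3 Ae) +
        Complex.I • commS φe (Em d1 d2 d3 Am) -
        Complex.I • (cross (Ee d0 d1 d2 d3 φe Ae) Am +
          cross Am (Ee d0 d1 d2 d3 φe Ae) +
          cross (Bm d0 d1 d2 d3 φm Am) Ae +
          cross Ae (Bm d0 d1 d2 d3 φm Am)) := by
  have m0 : d0 ∈ [d0, d1, d2, d3] := by simp
  have m1 : d1 ∈ [d0, d1, d2, d3] := by simp
  have m2 : d2 ∈ [d0, d1, d2, d3] := by simp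
  have m3 : d3 ∈ [d0, d1, d2, d3] := by simp
  have e10 : ∀ x : B, d1 (d0 x) = d0 (d1 x) := hcomm d1 m1 d0 m0
  have e20 : ∀ x : B, d2 (d0 x) = d0 (d2 x) := hcomm d2 m2 d0 m0
  have e30 : ∀ x : B, d3 (d0 x) = d0 (d3 x) := hcomm d3 m3 d0 m0
  have e21 : ∀ x : B, d2 (d1 x) = d1 (d2 x) := hcomm d2 m2 d1 m1
  have e31 : ∀ x : B, d3 (d1 x) = d1 (d3 x) := hcomm d3 m3 d1 m1
  have e32 : ∀ x : B, d3 (d2 x) = d2 (d3 x) := hcomm d3 m3 d2 m2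
  constructor <;>
  · refine Prod.ext ?_ (Prod.ext ?_ ?_) <;>
    · simp only [De, He, Hm, Dm, Ee, Be, Bm, Em, Kv, Cv, curl, dmap, grad, cross, commS,
        Prod.fst_add, Prod.snd_add, Prod.fst_sub, Prod.snd_sub, Prod.fst_neg, Prod.snd_neg,
        Prod.smul_fst, Prod.smul_snd]
      simp only [h0.map_add, h1.map_add, h2.map_add, h3.map_add,
        h0.map_sub', h1.map_sub', h2.map_sub', h3.map_sub',
        h0.map_neg', h1.map_neg', h2.map_neg', h3.map_neg',
        h0.map_smul, h1.map_smul, h2.map_smul, h3.map_smul,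
        h0.leibniz, h1.leibniz, h2.leibniz, h3.leibniz,
        e10, e20, e30, e21, e31, e32]
      simp only [Algebra.smul_def]
      noncomm_ring


end TwoPhoton

end NC
end
end
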